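/- Kronecker products of independent absolutely continuous vectors are (k+l−1)-analytic: Let a ∈ ℝ^k and b ∈ ℝ^l be independent random vectors such that the product measure μ_a × μ_b is absolutely continuous with respect to Lebesgue measure on ℝ^{k+l}. Then the random vector x = a ⊗ b ∈ ℝ^{kl} is (k+l−1)-analytic. -/

import Mathlib

set_option maxHeartbeats 1000000
open MeasureTheory Filter Set Metric Bornology Matrix Pointwise
open scoped ENNReal NNReal
noncomputable def diffMatrix (s m : ℕ) (h : EuclideanSpace ℝ (Fin s) → EuclideanSpace ℝ (Fin m))
    (v : EuclideanSpace ℝ (Fin s)) : Matrix (Fin m) (Fin s) ℝ :=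
  Matrix.of fun i j => fderiv ℝ h v (EuclideanSpace.single j 1) i

noncomputable def jacobian (s m : ℕ) (h : EuclideanSpace ℝ (Fin s) → EuclideanSpace ℝ (Fin m))
    (v : EuclideanSpace ℝ (Fin s)) : ℝ :=
  if m < s then Real.sqrt ((diffMatrix s m h v * (diffMatrix s m h v)ᵀ).det)
  else Real.sqrt (((diffMatrix s m h v)ᵀ * diffMatrix s m h v).det)

def IsAnalyticMeasure (s m : ℕ) (μ : Measure (EuclideanSpace ℝ (Fin m))) : Prop :=
  ∀ U : Set (EuclideanSpace ℝ (Fin m)), 0 < μ U →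
    ∃ (h : EuclideanSpace ℝ (Fin s) → EuclideanSpace ℝ (Fin m)) (A : Set (EuclideanSpace ℝ (Fin s))),
      AnalyticOnNhd ℝ h Set.univ ∧ (∃ v, jacobian s m h v ≠ 0) ∧ 0 < volume A ∧ h '' A ⊆ U
noncomputable def kron {k l : ℕ} (u : EuclideanSpace ℝ (Fin k)) (v : EuclideanSpace ℝ (Fin l)) :
    EuclideanSpace ℝ (Fin (k * l)) :=
  (EuclideanSpace.equiv (Fin (k * l)) ℝ).symm
    (fun p => u (finProdFinEquiv.symm p).1 * v (finProdFinEquiv.symm p).2)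

namespace KronAux


lemma eqs_apply {n : ℕ} (f : Fin n → ℝ) (p : Fin n) :
    ((EuclideanSpace.equiv (Fin n) ℝ).symm f) p = f p := rfl

variable (k l : ℕ)

def idx1 (hl : 0 < l) (i : Fin k) : Fin (k+l-1) := ⟨i.1, by have := i.isLt; omega⟩
def idx2 (hk : 0 < k) (j : Fin l) : Fin (k+l-1) := ⟨k + j.1 - 1, by have := j.isLt; omega⟩

lemma kron_apply {k l : ℕ} (u : EuclideanSpace ℝ (Fin k)) (v : EuclideanSpace ℝ (Fin l))
    (i : Fin k) (j : Fin l) : kron u v (finProdFinEquiv (i,j)) = u i * v j := by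
  rw [kron, eqs_apply, Equiv.symm_apply_apply]

noncomputable def hmap (hk : 0 < k) (hl : 0 < l) (v : EuclideanSpace ℝ (Fin (k+l-1))) :
    EuclideanSpace ℝ (Fin (k*l)) :=
  (EuclideanSpace.equiv (Fin (k*l)) ℝ).symm fun p =>
    v (idx1 k l hl (finProdFinEquiv.symm p).1) *
      (if (finProdFinEquiv.symm p).2 = ⟨0, hl⟩ then 1
        else v (idx2 k l hk (finProdFinEquiv.symm p).2))

lemma hmap_apply (hk : 0 < k) (hl : 0 < l) (v : EuclideanSpace ℝ (Fin (k+l-1)))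
    (i : Fin k) (j : Fin l) :
    hmap k l hk hl v (finProdFinEquiv (i,j)) =
      v (idx1 k l hl i) * (if j = ⟨0, hl⟩ then 1 else v (idx2 k l hk j)) := by
  rw [hmap, eqs_apply, Equiv.symm_apply_apply]

lemma hmap_analytic (hk : 0 < k) (hl : 0 < l) :
    AnalyticOnNhd ℝ (hmap k l hk hl) Set.univ := by
  have h1 : AnalyticOnNhd ℝ (fun (v : EuclideanSpace ℝ (Fin (k+l-1))) (p : Fin (k*l)) =>
      v (idx1 k l hl (finProdFinEquiv.symm p).1) *
      (if (finProdFinEquiv.symm p).2 = ⟨0, hl⟩ then 1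
        else v (idx2 k l hk (finProdFinEquiv.symm p).2))) Set.univ := by
    apply AnalyticOnNhd.pi
    intro p
    apply AnalyticOnNhd.mul
    · exact fun x _ => ((PiLp.proj 2 (𝕜 := ℝ) (fun _ : Fin (k+l-1) => ℝ)
        (idx1 k l hl (finProdFinEquiv.symm p).1)).analyticAt x)
    · by_cases hj : (finProdFinEquiv.symm p).2 = ⟨0, hl⟩
      · simp only [hj, if_true]; exact analyticOnNhd_const
      · simp only [hj, if_false]
        exact fun x _ => ((PiLp.proj 2 (𝕜 := ℝ) (fun _ : Fin (k+l-1) => ℝ)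
          (idx2 k l hk (finProdFinEquiv.symm p).2)).analyticAt x)
  intro x hx
  exact (((EuclideanSpace.equiv (Fin (k*l)) ℝ).symm.toContinuousLinearMap).analyticAt _).comp
    (h1 x hx)
variable (hk : 0 < k) (hl : 0 < l)

noncomputable def v0 : EuclideanSpace ℝ (Fin (k+l-1)) :=
  EuclideanSpace.single (idx1 k l hl ⟨0, hk⟩) 1

noncomputable def Lraw : EuclideanSpace ℝ (Fin (k+l-1)) →ₗ[ℝ] EuclideanSpace ℝ (Fin (k*l)) where
  toFun dv := (EuclideanSpace.equiv (Fin (k*l)) ℝ).symm fun p =>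
    if (finProdFinEquiv.symm p).2 = ⟨0, hl⟩ then dv (idx1 k l hl (finProdFinEquiv.symm p).1)
    else if (finProdFinEquiv.symm p).1 = ⟨0, hk⟩ then dv (idx2 k l hk (finProdFinEquiv.symm p).2)
    else 0
  map_add' x y := by
    ext p
    simp only [eqs_apply, PiLp.add_apply]
    split_ifs <;> simp [PiLp.add_apply]
  map_smul' c x := by
    ext p
    simp only [eqs_apply, PiLp.smul_apply, RingHom.id_apply, smul_eq_mul]
    split_ifs <;> simp [PiLp.smul_apply, smul_eq_mul]

noncomputable def Lclm : EuclideanSpace ℝ (Fin (k+l-1)) →L[ℝ] EuclideanSpace ℝ (Fin (k*l)) :=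
  LinearMap.toContinuousLinearMap (Lraw k l hk hl)

lemma hmap_hasFDerivAt : HasStrictFDerivAt (hmap k l hk hl) (Lclm k l hk hl) (v0 k l hk hl) := by
  rw [hasStrictFDerivAt_piLp]
  intro p
  obtain ⟨⟨i, j⟩, hq⟩ : ∃ q, finProdFinEquiv.symm p = q := ⟨_, rfl⟩
  have hcoord : (fun v => hmap k l hk hl v p) =
      (fun v : EuclideanSpace ℝ (Fin (k+l-1)) =>
        v (idx1 k l hl i) * (if j = ⟨0, hl⟩ then 1 else v (idx2 k l hk j))) := by
    funext v
    show v (idx1 k l hl (finProdFinEquiv.symm p).1) *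
      (if (finProdFinEquiv.symm p).2 = ⟨0, hl⟩ then 1
        else v (idx2 k l hk (finProdFinEquiv.symm p).2)) = _
    rw [hq]
  rw [hcoord]
  have hL : ∀ dv : EuclideanSpace ℝ (Fin (k+l-1)),
      ((PiLp.proj 2 (𝕜 := ℝ) (fun _ : Fin (k*l) => ℝ) p).comp (Lclm k l hk hl)) dv =
      (if j = ⟨0, hl⟩ then dv (idx1 k l hl i)
        else if i = ⟨0, hk⟩ then dv (idx2 k l hk j) else 0) := by
    intro dv
    show (if (finProdFinEquiv.symm p).2 = ⟨0, hl⟩ then dv (idx1 k l hl (finProdFinEquiv.symm p).1)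
      else if (finProdFinEquiv.symm p).1 = ⟨0, hk⟩ then dv (idx2 k l hk (finProdFinEquiv.symm p).2)
      else 0) = _
    rw [hq]
  by_cases hc : j = ⟨0, hl⟩
  · simp only [hc, if_true]
    have h1 := HasStrictFDerivAt.mul (c := fun v : EuclideanSpace ℝ (Fin (k+l-1)) => v (idx1 k l hl i))
      (x := v0 k l hk hl)
      ((PiLp.proj 2 (𝕜 := ℝ) (fun _ : Fin (k+l-1) => ℝ) (idx1 k l hl i)).hasStrictFDerivAt)
      (hasStrictFDerivAt_const (1:ℝ) (v0 k l hk hl))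
    have heq : (PiLp.proj 2 (𝕜 := ℝ) (fun _ : Fin (k*l) => ℝ) p).comp (Lclm k l hk hl)
        = (v0 k l hk hl) (idx1 k l hl i) • (0 : EuclideanSpace ℝ (Fin (k+l-1)) →L[ℝ] ℝ)
          + (1:ℝ) • (PiLp.proj 2 (𝕜 := ℝ) (fun _ : Fin (k+l-1) => ℝ) (idx1 k l hl i)) := by
      ext dv
      rw [hL dv, if_pos hc]
      simp
    rw [heq]
    exact h1
  · simp only [hc, if_false]
    have h1 := HasStrictFDerivAt.mul (x := v0 k l hk hl)
      ((PiLp.proj 2 (𝕜 := ℝ) (fun _ : Fin (k+l-1) => ℝ) (idx1 k l hl i)).hasStrictFDerivAt)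
      ((PiLp.proj 2 (𝕜 := ℝ) (fun _ : Fin (k+l-1) => ℝ) (idx2 k l hk j)).hasStrictFDerivAt)
    have hv2 : (v0 k l hk hl) (idx2 k l hk j) = 0 := by
      rw [v0, EuclideanSpace.single_apply, if_neg]
      intro hcon
      have h1 := congrArg Fin.val hcon
      simp only [idx1, idx2] at h1
      have := j.isLt
      have hj0 : j.1 ≠ 0 := fun h0 => hc (Fin.ext h0)
      omega
    have hv1 : (v0 k l hk hl) (idx1 k l hl i) = (if i = ⟨0, hk⟩ then (1:ℝ) else 0) := by
      rw [v0, EuclideanSpace.single_apply]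
      congr 1
      simp only [idx1, Fin.ext_iff]
    have heq : (PiLp.proj 2 (𝕜 := ℝ) (fun _ : Fin (k*l) => ℝ) p).comp (Lclm k l hk hl)
        = (v0 k l hk hl) (idx1 k l hl i) •
            (PiLp.proj 2 (𝕜 := ℝ) (fun _ : Fin (k+l-1) => ℝ) (idx2 k l hk j))
          + (v0 k l hk hl) (idx2 k l hk j) •
            (PiLp.proj 2 (𝕜 := ℝ) (fun _ : Fin (k+l-1) => ℝ) (idx1 k l hl i)) := by
      ext dv
      rw [hL dv, if_neg hc]
      simp only [ContinuousLinearMap.add_apply, ContinuousLinearMap.smul_apply, smul_eq_mul,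
        hv1, hv2, zero_mul, add_zero]
      split_ifs with hi
      · show dv (idx2 k l hk j) = 1 * dv (idx2 k l hk j); ring
      · show (0:ℝ) = 0 * dv (idx2 k l hk j); ring
    rw [heq]
    exact h1

def σidx (a : Fin (k+l-1)) : Fin k × Fin l :=
  if h : a.1 < k then (⟨a.1, h⟩, ⟨0, hl⟩)
  else (⟨0, hk⟩, ⟨a.1 - k + 1, by have := a.isLt; omega⟩)

noncomputable def pt (a : Fin (k+l-1)) : Fin (k*l) := finProdFinEquiv (σidx k l hk hl a)

lemma ptInj : Function.Injective (pt k l hk hl) := by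
  intro a b hab
  have h1 : σidx k l hk hl a = σidx k l hk hl b := finProdFinEquiv.injective hab
  rw [σidx, σidx] at h1
  split_ifs at h1 with h2 h3 h3 <;>
    simp only [Prod.mk.injEq, Fin.ext_iff] at h1 <;> exact Fin.ext (by omega)

lemma diffMatrix_hmap :
    diffMatrix (k+l-1) (k*l) (hmap k l hk hl) (v0 k l hk hl) =
      Matrix.of (fun p a => if p = pt k l hk hl a then (1:ℝ) else 0) := by
  ext p a
  show fderiv ℝ (hmap k l hk hl) (v0 k l hk hl) (EuclideanSpace.single a 1) p = _
  rw [(hmap_hasFDerivAt k l hk hl).hasFDerivAt.fderiv, Matrix.of_apply]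
  obtain ⟨⟨i, j⟩, hq⟩ : ∃ q, finProdFinEquiv.symm p = q := ⟨_, rfl⟩
  have hLv : (Lclm k l hk hl) (EuclideanSpace.single a 1) p =
      (if j = ⟨0, hl⟩ then EuclideanSpace.single a (1:ℝ) (idx1 k l hl i)
        else if i = ⟨0, hk⟩ then EuclideanSpace.single a (1:ℝ) (idx2 k l hk j) else 0) := by
    show (if (finProdFinEquiv.symm p).2 = ⟨0, hl⟩
        then EuclideanSpace.single a (1:ℝ) (idx1 k l hl (finProdFinEquiv.symm p).1)
        else if (finProdFinEquiv.symm p).1 = ⟨0, hk⟩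
          then EuclideanSpace.single a (1:ℝ) (idx2 k l hk (finProdFinEquiv.symm p).2) else 0) = _
    rw [hq]
  rw [hLv]
  have hp : p = finProdFinEquiv (i, j) := by rw [← hq, Equiv.apply_symm_apply]
  have hiff : p = pt k l hk hl a ↔
      (if a.1 < k then (i.1 = a.1 ∧ j.1 = 0) else (i.1 = 0 ∧ j.1 = a.1 - k + 1)) := by
    rw [hp, pt, Equiv.apply_eq_iff_eq, σidx]
    split_ifs with hik
    · simp only [Prod.mk.injEq, Fin.ext_iff]
    · simp only [Prod.mk.injEq, Fin.ext_iff]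
  have hsingle : ∀ c, EuclideanSpace.single a (1:ℝ) c = if c = a then (1:ℝ) else 0 :=
    fun c => EuclideanSpace.single_apply _ _ _
  simp only [hsingle]
  have hil := i.isLt
  have hjl := j.isLt
  have hal := a.isLt
  by_cases hpa : p = pt k l hk hl a
  · rw [if_pos hpa]
    have hA := hiff.1 hpa
    clear hiff hpa hLv hq hp
    split_ifs at hA ⊢ with h1 h2 h3 h4 h5 <;>
      simp only [Fin.ext_iff, idx1, idx2] at *
    all_goals (try rfl)
    all_goals (exfalso; omega)
  · rw [if_neg hpa]
    have hA := fun x => hpa (hiff.2 x)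
    clear hiff hpa hLv hq hp
    split_ifs at hA ⊢ with h1 h2 h3 h4 h5 <;>
      simp only [Fin.ext_iff, idx1, idx2] at *
    all_goals (try rfl)
    all_goals (try (exfalso; omega))
    all_goals exact absurd ⟨by omega, by omega⟩ hA

lemma jacobian_hmap : jacobian (k+l-1) (k*l) (hmap k l hk hl) (v0 k l hk hl) = 1 := by
  have hle : k + l - 1 ≤ k * l := by
    cases k with
    | zero => omega
    | succ k' => cases l with
      | zero => omega
      | succ l' =>
        have : (k'+1) * (l'+1) = k'*l' + k' + l' + 1 := by ring
        omega
  rw [jacobian, if_neg (by omega)]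
  rw [diffMatrix_hmap]
  have hmat : (Matrix.of (fun p a => if p = pt k l hk hl a then (1:ℝ) else 0))ᵀ *
      (Matrix.of (fun p a => if p = pt k l hk hl a then (1:ℝ) else 0)) = 1 := by
    ext a b
    rw [Matrix.mul_apply]
    simp only [Matrix.transpose_apply, Matrix.of_apply, ite_mul, one_mul, zero_mul]
    rw [Finset.sum_eq_single (pt k l hk hl a)]
    · rw [if_pos rfl]
      by_cases hab : a = b
      · rw [hab, if_pos rfl, Matrix.one_apply_eq]
      · rw [if_neg (fun hh => hab (ptInj k l hk hl hh)), Matrix.one_apply_ne hab]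
    · intro c _ hc
      rw [if_neg hc]
    · intro hcon
      exact absurd (Finset.mem_univ _) hcon
  rw [hmat, Matrix.det_one, Real.sqrt_one]


/-- coordinate-renaming maps between sup-metric pi types are 1-Lipschitz -/
lemma lip_reindex {ι κ : Type*} [Fintype ι] [Fintype κ] (f : (ι → ℝ) → (κ → ℝ)) (r : κ → ι)
    (hf : ∀ x a, f x a = x (r a)) : LipschitzWith 1 f := by
  apply LipschitzWith.of_dist_le_mul
  intro x y
  rw [show ((1:NNReal):ℝ) = 1 from rfl, one_mul, dist_pi_le_iff dist_nonneg]
  intro a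
  rw [hf, hf]
  exact dist_le_pi_dist x y (r a)

noncomputable def appendME (k l : ℕ) : ((Fin k → ℝ) × (Fin l → ℝ)) ≃ᵐ (Fin (k+l) → ℝ) :=
  (MeasurableEquiv.sumPiEquivProdPi (fun _ : Fin k ⊕ Fin l => ℝ)).symm.trans
    (MeasurableEquiv.piCongrLeft (fun _ : Fin (k+l) => ℝ) finSumFinEquiv)

lemma appendME_mp (k l : ℕ) : MeasurePreserving (appendME k l) volume volume := by
  have h1 := MeasureTheory.volume_measurePreserving_sumPiEquivProdPi_symm
    (fun _ : Fin k ⊕ Fin l => ℝ)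
  have h2 := MeasureTheory.volume_measurePreserving_piCongrLeft (fun _ : Fin (k+l) => ℝ)
    finSumFinEquiv
  exact h2.comp h1

lemma appendME_apply (k l : ℕ) (x : (Fin k → ℝ) × (Fin l → ℝ)) (a : Fin (k+l)) :
    appendME k l x a = Sum.elim x.1 x.2 (finSumFinEquiv.symm a) := by
  obtain ⟨c, hc⟩ : ∃ c, finSumFinEquiv.symm a = c := ⟨_, rfl⟩
  have ha : a = finSumFinEquiv c := by rw [← hc, Equiv.apply_symm_apply]
  subst ha
  rw [Equiv.symm_apply_apply] at hc ⊢
  have hx : x = (x.1, x.2) := rfl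
  cases c with
  | inl i =>
    show (Equiv.piCongrLeft (fun _ : Fin (k+l) => ℝ) finSumFinEquiv)
      ((Equiv.sumPiEquivProdPi (fun _ : Fin k ⊕ Fin l => ℝ)).symm (x.1, x.2))
        (finSumFinEquiv (Sum.inl i)) = _
    rw [Equiv.piCongrLeft_sumInl (fun _ : Fin (k+l) => ℝ) finSumFinEquiv x.1 x.2 i]
    rfl
  | inr j =>
    show (Equiv.piCongrLeft (fun _ : Fin (k+l) => ℝ) finSumFinEquiv)
      ((Equiv.sumPiEquivProdPi (fun _ : Fin k ⊕ Fin l => ℝ)).symm (x.1, x.2))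
        (finSumFinEquiv (Sum.inr j)) = _
    rw [Equiv.piCongrLeft_sumInr (fun _ : Fin (k+l) => ℝ) finSumFinEquiv x.1 x.2 j]
    rfl

lemma appendME_lip (k l : ℕ) : LipschitzWith 1 ⇑(appendME k l) := by
  apply LipschitzWith.of_dist_le_mul
  intro x y
  rw [show ((1:NNReal):ℝ) = 1 from rfl, one_mul, dist_pi_le_iff dist_nonneg]
  intro a
  rw [appendME_apply, appendME_apply]
  rcases hsc : finSumFinEquiv.symm a with i | j
  · calc dist (x.1 i) (y.1 i) ≤ dist x.1 y.1 := dist_le_pi_dist x.1 y.1 i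
      _ ≤ dist x y := by rw [Prod.dist_eq]; exact le_max_left _ _
  · calc dist (x.2 j) (y.2 j) ≤ dist x.2 y.2 := dist_le_pi_dist x.2 y.2 j
      _ ≤ dist x y := by rw [Prod.dist_eq]; exact le_max_right _ _

lemma appendME_symm_lip (k l : ℕ) : LipschitzWith 1 ⇑(appendME k l).symm := by
  have h1 : ∀ (y : Fin (k+l) → ℝ), (appendME k l).symm y =
      (fun i => y (finSumFinEquiv (Sum.inl i)), fun j => y (finSumFinEquiv (Sum.inr j))) := by
    intro y
    apply (appendME k l).injective
    apply funext
    intro a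
    rw [MeasurableEquiv.apply_symm_apply, appendME_apply]
    obtain ⟨c, hc⟩ : ∃ c, finSumFinEquiv.symm a = c := ⟨_, rfl⟩
    have ha : a = finSumFinEquiv c := by rw [← hc, Equiv.apply_symm_apply]
    subst ha
    rw [Equiv.symm_apply_apply] at hc ⊢
    cases c <;> rfl
  have h2 : LipschitzWith 1 (fun (y : Fin (k+l) → ℝ) =>
      ((fun i => y (finSumFinEquiv (Sum.inl i)), fun j => y (finSumFinEquiv (Sum.inr j)))
        : (Fin k → ℝ) × (Fin l → ℝ))) := by
    have ha := lip_reindex (ι := Fin (k+l)) (κ := Fin k)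
      (fun y i => y (finSumFinEquiv (Sum.inl i))) (fun i => finSumFinEquiv (Sum.inl i))
      (fun _ _ => rfl)
    have hb := lip_reindex (ι := Fin (k+l)) (κ := Fin l)
      (fun y j => y (finSumFinEquiv (Sum.inr j))) (fun j => finSumFinEquiv (Sum.inr j))
      (fun _ _ => rfl)
    simpa using ha.prodMk hb
  have : ⇑(appendME k l).symm = (fun (y : Fin (k+l) → ℝ) =>
      ((fun i => y (finSumFinEquiv (Sum.inl i)), fun j => y (finSumFinEquiv (Sum.inr j)))
        : (Fin k → ℝ) × (Fin l → ℝ))) := funext h1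
  rw [this]
  exact h2

noncomputable def toPiX (d : ℕ) : (EuclideanSpace ℝ (Fin d) × ℝ) ≃ᵐ (Fin (d+1) → ℝ) :=
  (((MeasurableEquiv.toLp 2 (Fin d → ℝ)).symm).prodCongr
    ((MeasurableEquiv.funUnique (Fin 1) ℝ).symm)).trans (appendME d 1)

noncomputable def toPiY (k l : ℕ) :
    (EuclideanSpace ℝ (Fin k) × EuclideanSpace ℝ (Fin l)) ≃ᵐ (Fin (k+l) → ℝ) :=
  (((MeasurableEquiv.toLp 2 (Fin k → ℝ)).symm).prodCongr
    ((MeasurableEquiv.toLp 2 (Fin l → ℝ)).symm)).trans (appendME k l)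

lemma toPiX_mp (d : ℕ) : MeasurePreserving (toPiX d) volume volume := by
  have h1 : MeasurePreserving
      (⇑(((MeasurableEquiv.toLp 2 (Fin d → ℝ)).symm).prodCongr
        ((MeasurableEquiv.funUnique (Fin 1) ℝ).symm))) volume volume := by
    exact (EuclideanSpace.volume_preserving_symm_measurableEquiv_toLp (Fin d)).prod
      (MeasurePreserving.symm _ (MeasureTheory.volume_preserving_funUnique (Fin 1) ℝ))
  exact (appendME_mp d 1).comp h1

lemma toPiY_mp (k l : ℕ) : MeasurePreserving (toPiY k l) volume volume := by
  have h1 : MeasurePreserving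
      (⇑(((MeasurableEquiv.toLp 2 (Fin k → ℝ)).symm).prodCongr
        ((MeasurableEquiv.toLp 2 (Fin l → ℝ)).symm))) volume volume := by
    exact (EuclideanSpace.volume_preserving_symm_measurableEquiv_toLp (Fin k)).prod
      (EuclideanSpace.volume_preserving_symm_measurableEquiv_toLp (Fin l))
  exact (appendME_mp k l).comp h1

lemma exists_lip_toPiX_symm (d : ℕ) : ∃ K : NNReal, LipschitzWith K ⇑(toPiX d).symm := by
  have h1 : ∃ K : NNReal, LipschitzWith K ⇑((MeasurableEquiv.toLp 2 (Fin d → ℝ)).symm).symm :=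
    ⟨_, ((EuclideanSpace.equiv (Fin d) ℝ).symm.toContinuousLinearMap).lipschitz⟩
  obtain ⟨K1, hK1⟩ := h1
  have h2 : LipschitzWith 1 ⇑(MeasurableEquiv.funUnique (Fin 1) ℝ) := by
    apply LipschitzWith.of_dist_le_mul
    intro x y
    rw [show ((1:NNReal):ℝ) = 1 from rfl, one_mul]
    exact dist_le_pi_dist x y _
  refine ⟨max K1 1 * 1, ?_⟩
  have hcomp : ⇑(toPiX d).symm = (fun q => (((MeasurableEquiv.toLp 2 (Fin d → ℝ)).symm).symm q.1,
      (MeasurableEquiv.funUnique (Fin 1) ℝ) q.2)) ∘ ⇑(appendME d 1).symm := rfl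
  rw [hcomp]
  apply LipschitzWith.comp _ (appendME_symm_lip d 1)
  have := (hK1.comp LipschitzWith.prod_fst).prodMk (h2.comp LipschitzWith.prod_snd)
  simpa using this

lemma exists_lip_toPiY (k l : ℕ) : ∃ K : NNReal, LipschitzWith K ⇑(toPiY k l) := by
  refine ⟨1 * max 1 1, ?_⟩
  have hcomp : ⇑(toPiY k l) = ⇑(appendME k l) ∘
      (fun q => (((MeasurableEquiv.toLp 2 (Fin k → ℝ)).symm) q.1,
        ((MeasurableEquiv.toLp 2 (Fin l → ℝ)).symm) q.2)) := rfl
  rw [hcomp]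
  apply LipschitzWith.comp (appendME_lip k l)
  have h1 : LipschitzWith 1 ⇑((MeasurableEquiv.toLp 2 (Fin k → ℝ)).symm) := by
    rw [MeasurableEquiv.coe_toLp_symm]
    exact PiLp.lipschitzWith_ofLp 2 _
  have h2 : LipschitzWith 1 ⇑((MeasurableEquiv.toLp 2 (Fin l → ℝ)).symm) := by
    rw [MeasurableEquiv.coe_toLp_symm]
    exact PiLp.lipschitzWith_ofLp 2 _
  simpa using (h1.comp LipschitzWith.prod_fst).prodMk (h2.comp LipschitzWith.prod_snd)

lemma muH_pi_eq_volume (n : ℕ) : (μH[(n : ℝ)] : Measure (Fin n → ℝ)) = volume := by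
  have := MeasureTheory.hausdorffMeasure_pi_real (ι := Fin n)
  rwa [Fintype.card_fin] at this

lemma muH_null_of_null (d : ℕ) (s : Set (EuclideanSpace ℝ (Fin d) × ℝ))
    (hm : MeasurableSet s) (h0 : volume s = 0) : μH[((d+1 : ℕ) : ℝ)] s = 0 := by
  obtain ⟨K, hK⟩ := exists_lip_toPiX_symm d
  have h1 : volume (⇑(toPiX d) '' s) = 0 := by
    rw [MeasurableEquiv.image_eq_preimage_symm]
    rw [(MeasurePreserving.symm _ (toPiX_mp d)).measure_preimage hm.nullMeasurableSet]
    exact h0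
  have h2 : μH[((d+1 : ℕ) : ℝ)] (⇑(toPiX d) '' s) = 0 := by
    rw [muH_pi_eq_volume (d+1)]
    exact h1
  have h3 : s = ⇑(toPiX d).symm '' (⇑(toPiX d) '' s) := by
    rw [MeasurableEquiv.image_eq_preimage_symm, MeasurableEquiv.image_eq_preimage_symm]
    ext z
    simp
  rw [h3]
  refine le_antisymm ?_ zero_le
  calc μH[((d+1 : ℕ) : ℝ)] (⇑(toPiX d).symm '' (⇑(toPiX d) '' s))
      ≤ (K : ℝ≥0∞) ^ ((d+1 : ℕ) : ℝ) * μH[((d+1 : ℕ) : ℝ)] (⇑(toPiX d) '' s) :=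
        hK.hausdorffMeasure_image_le (by positivity) _
    _ = 0 := by rw [h2, mul_zero]

lemma null_of_muH_null (k l : ℕ) (T : Set (EuclideanSpace ℝ (Fin k) × EuclideanSpace ℝ (Fin l)))
    (h0 : μH[((k+l : ℕ) : ℝ)] T = 0) : volume T = 0 := by
  obtain ⟨K, hK⟩ := exists_lip_toPiY k l
  have h1 : μH[((k+l : ℕ) : ℝ)] (⇑(toPiY k l) '' T) = 0 := by
    refine le_antisymm ?_ zero_le
    calc μH[((k+l : ℕ) : ℝ)] (⇑(toPiY k l) '' T)
        ≤ (K : ℝ≥0∞) ^ ((k+l : ℕ) : ℝ) * μH[((k+l : ℕ) : ℝ)] T :=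
          hK.hausdorffMeasure_image_le (by positivity) _
      _ = 0 := by rw [h0, mul_zero]
  rw [muH_pi_eq_volume (k+l)] at h1
  have h2 : T ⊆ ⇑(toPiY k l) ⁻¹' (toMeasurable volume (⇑(toPiY k l) '' T)) :=
    fun x hx => subset_toMeasurable _ _ (mem_image_of_mem _ hx)
  refine measure_mono_null h2 ?_
  rw [(toPiY_mp k l).measure_preimage (measurableSet_toMeasurable _ _).nullMeasurableSet]
  rw [measure_toMeasurable]
  exact h1

lemma image_lipschitzOnWith_null {k l : ℕ} (hk : 0 < k) (hl : 0 < l)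
    (G : EuclideanSpace ℝ (Fin (k+l-1)) × ℝ → EuclideanSpace ℝ (Fin k) × EuclideanSpace ℝ (Fin l))
    {D : Set (EuclideanSpace ℝ (Fin (k+l-1)) × ℝ)} {K : NNReal}
    (hG : LipschitzOnWith K G D) (hm : MeasurableSet D) (h0 : volume D = 0) :
    volume (G '' D) = 0 := by
  apply null_of_muH_null
  have hcast : ((k + l : ℕ) : ℝ) = (((k+l-1) + 1 : ℕ) : ℝ) := by
    congr 1
    omega
  have h1 : μH[((k + l : ℕ) : ℝ)] D = 0 := by
    rw [hcast]
    exact muH_null_of_null (k+l-1) D hm h0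
  refine le_antisymm ?_ zero_le
  calc μH[((k+l : ℕ) : ℝ)] (G '' D)
      ≤ (K : ℝ≥0∞) ^ ((k+l : ℕ) : ℝ) * μH[((k+l : ℕ) : ℝ)] D :=
        hG.hausdorffMeasure_image_le (by positivity)
    _ = 0 := by rw [h1, mul_zero]


lemma hyperplane_null (n : ℕ) (i : Fin n) :
    volume {v : EuclideanSpace ℝ (Fin n) | v i = 0} = 0 := by
  have h1 : {v : EuclideanSpace ℝ (Fin n) | v i = 0} =
      ⇑((MeasurableEquiv.toLp 2 (Fin n → ℝ)).symm) ⁻¹' {f : Fin n → ℝ | f i = 0} := rfl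
  have hms : MeasurableSet {f : Fin n → ℝ | f i = 0} :=
    measurable_pi_apply i (measurableSet_singleton 0)
  rw [h1, (EuclideanSpace.volume_preserving_symm_measurableEquiv_toLp (Fin n)).measure_preimage
    hms.nullMeasurableSet]
  rw [volume_pi]
  exact Measure.pi_hyperplane _ i 0

lemma null_fst (k l : ℕ) (i : Fin k) :
    volume {p : EuclideanSpace ℝ (Fin k) × EuclideanSpace ℝ (Fin l) | p.1 i = 0} = 0 := by
  have h1 : {p : EuclideanSpace ℝ (Fin k) × EuclideanSpace ℝ (Fin l) | p.1 i = 0} =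
      {v : EuclideanSpace ℝ (Fin k) | v i = 0} ×ˢ (univ : Set (EuclideanSpace ℝ (Fin l))) := by
    ext p; simp [Set.mem_prod]
  rw [h1, MeasureTheory.Measure.volume_eq_prod, Measure.prod_prod, hyperplane_null, zero_mul]

lemma null_snd (k l : ℕ) (j : Fin l) :
    volume {p : EuclideanSpace ℝ (Fin k) × EuclideanSpace ℝ (Fin l) | p.2 j = 0} = 0 := by
  have h1 : {p : EuclideanSpace ℝ (Fin k) × EuclideanSpace ℝ (Fin l) | p.2 j = 0} =
      (univ : Set (EuclideanSpace ℝ (Fin k))) ×ˢ {v : EuclideanSpace ℝ (Fin l) | v j = 0} := by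
    ext p; simp [Set.mem_prod]
  rw [h1, MeasureTheory.Measure.volume_eq_prod, Measure.prod_prod, hyperplane_null, mul_zero]



noncomputable def phi (p : EuclideanSpace ℝ (Fin k) × EuclideanSpace ℝ (Fin l)) :
    EuclideanSpace ℝ (Fin (k+l-1)) :=
  (EuclideanSpace.equiv (Fin (k+l-1)) ℝ).symm fun a =>
    if h : a.1 < k then p.2 ⟨0, hl⟩ * p.1 ⟨a.1, h⟩
    else p.2 ⟨a.1 - k + 1, by have := a.isLt; omega⟩ / p.2 ⟨0, hl⟩

noncomputable def Gmap (q : EuclideanSpace ℝ (Fin (k+l-1)) × ℝ) :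
    EuclideanSpace ℝ (Fin k) × EuclideanSpace ℝ (Fin l) :=
  ((EuclideanSpace.equiv (Fin k) ℝ).symm fun i => q.1 (idx1 k l hl i) / q.2,
   (EuclideanSpace.equiv (Fin l) ℝ).symm fun j =>
     if j = ⟨0, hl⟩ then q.2 else q.2 * q.1 (idx2 k l hk j))

lemma G_section (p : EuclideanSpace ℝ (Fin k) × EuclideanSpace ℝ (Fin l))
    (hp : p.2 ⟨0, hl⟩ ≠ 0) :
    Gmap k l hk hl (phi k l hk hl p, p.2 ⟨0, hl⟩) = p := by
  apply Prod.ext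
  · ext i
    show phi k l hk hl p (idx1 k l hl i) / p.2 ⟨0, hl⟩ = p.1 i
    show (if h : (idx1 k l hl i).1 < k then p.2 ⟨0, hl⟩ * p.1 ⟨(idx1 k l hl i).1, h⟩
      else p.2 ⟨(idx1 k l hl i).1 - k + 1, _⟩ / p.2 ⟨0, hl⟩) / p.2 ⟨0, hl⟩ = p.1 i
    rw [dif_pos (show (idx1 k l hl i).1 < k from i.isLt)]
    have : (⟨(idx1 k l hl i).1, i.isLt⟩ : Fin k) = i := rfl
    rw [this, mul_comm, mul_div_assoc, div_self hp, mul_one]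
  · ext j
    show (if j = ⟨0, hl⟩ then p.2 ⟨0, hl⟩
      else p.2 ⟨0, hl⟩ * phi k l hk hl p (idx2 k l hk j)) = p.2 j
    by_cases hj : j = ⟨0, hl⟩
    · rw [if_pos hj, hj]
    · rw [if_neg hj]
      have hj0 : j.1 ≠ 0 := fun h0 => hj (Fin.ext h0)
      have hge : ¬ ((idx2 k l hk j).1 < k) := by
        show ¬ (k + j.1 - 1 < k); omega
      show p.2 ⟨0, hl⟩ * (if h : (idx2 k l hk j).1 < k then p.2 ⟨0, hl⟩ * p.1 ⟨(idx2 k l hk j).1, h⟩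
        else p.2 ⟨(idx2 k l hk j).1 - k + 1, _⟩ / p.2 ⟨0, hl⟩) = p.2 j
      rw [dif_neg hge]
      have hidx : (⟨(idx2 k l hk j).1 - k + 1, by have := j.isLt; have := hge; omega⟩ : Fin l) = j := by
        apply Fin.ext
        show k + j.1 - 1 - k + 1 = j.1
        omega
      rw [hidx, mul_comm, div_mul_cancel₀ _ hp]

lemma Gmap_contDiffAt (q : EuclideanSpace ℝ (Fin (k+l-1)) × ℝ) (hq : q.2 ≠ 0) :
    ContDiffAt ℝ 1 (Gmap k l hk hl) q := by
  have h2ne : ∀ᶠ x : EuclideanSpace ℝ (Fin (k+l-1)) × ℝ in nhds q, True := by simp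
  apply ContDiffAt.prodMk
  · rw [contDiffAt_piLp]
    intro i
    have : (fun x : EuclideanSpace ℝ (Fin (k+l-1)) × ℝ =>
        ((EuclideanSpace.equiv (Fin k) ℝ).symm fun i' => x.1 (idx1 k l hl i') / x.2) i) =
        fun x : EuclideanSpace ℝ (Fin (k+l-1)) × ℝ => x.1 (idx1 k l hl i) / x.2 := rfl
    rw [this]
    apply ContDiffAt.div
    · exact (((PiLp.proj 2 (𝕜 := ℝ) (fun _ : Fin (k+l-1) => ℝ)
        (idx1 k l hl i)).contDiff).comp contDiff_fst).contDiffAt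
    · exact contDiff_snd.contDiffAt
    · exact hq
  · rw [contDiffAt_piLp]
    intro j
    have : (fun x : EuclideanSpace ℝ (Fin (k+l-1)) × ℝ =>
        ((EuclideanSpace.equiv (Fin l) ℝ).symm fun j' =>
          if j' = ⟨0, hl⟩ then x.2 else x.2 * x.1 (idx2 k l hk j')) j) =
        fun x : EuclideanSpace ℝ (Fin (k+l-1)) × ℝ =>
          if j = ⟨0, hl⟩ then x.2 else x.2 * x.1 (idx2 k l hk j) := rfl
    rw [this]
    by_cases hj : j = ⟨0, hl⟩
    · simp only [hj, if_true]
      exact contDiff_snd.contDiffAt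
    · simp only [hj, if_false]
      exact (contDiff_snd.contDiffAt).mul
        (((PiLp.proj 2 (𝕜 := ℝ) (fun _ : Fin (k+l-1) => ℝ)
          (idx2 k l hk j)).contDiff).comp contDiff_fst).contDiffAt

lemma S_null (N : Set (EuclideanSpace ℝ (Fin (k+l-1)))) (hNm : MeasurableSet N)
    (hN0 : volume N = 0) :
    volume {p : EuclideanSpace ℝ (Fin k) × EuclideanSpace ℝ (Fin l) |
      p.2 ⟨0, hl⟩ ≠ 0 ∧ phi k l hk hl p ∈ N} = 0 := by
  classical
  set Ω : Set (EuclideanSpace ℝ (Fin (k+l-1)) × ℝ) := {q | q.2 ≠ 0} with hΩ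
  have h1 : ∀ q ∈ Ω, ∃ (U : Set (EuclideanSpace ℝ (Fin (k+l-1)) × ℝ)) (K : NNReal),
      IsOpen U ∧ q ∈ U ∧ LipschitzOnWith K (Gmap k l hk hl) U := by
    intro q hq
    obtain ⟨K, t, ht, hlip⟩ := (Gmap_contDiffAt k l hk hl q hq).exists_lipschitzOnWith
    obtain ⟨U, hUt, hUo, hqU⟩ := _root_.mem_nhds_iff.1 ht
    exact ⟨U, K, hUo, hqU, hlip.mono hUt⟩
  choose! U K hUo hqU hlip using h1
  obtain ⟨T, hTc, hTU⟩ := TopologicalSpace.isOpen_iUnion_countable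
    (fun q : ↥Ω => U q.1) (fun q => hUo q.1 q.2)
  have hcover : Ω ⊆ ⋃ q ∈ T, U q.1 := by
    intro x hx
    rw [hTU]
    exact mem_iUnion.2 ⟨⟨x, hx⟩, hqU x hx⟩
  have hsub : {p : EuclideanSpace ℝ (Fin k) × EuclideanSpace ℝ (Fin l) |
      p.2 ⟨0, hl⟩ ≠ 0 ∧ phi k l hk hl p ∈ N} ⊆
      ⋃ q ∈ T, Gmap k l hk hl '' (U q.1 ∩ (N ×ˢ (univ : Set ℝ))) := by
    rintro p ⟨hp1, hp2⟩
    have hqin : ((phi k l hk hl p, p.2 ⟨0, hl⟩) :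
        EuclideanSpace ℝ (Fin (k+l-1)) × ℝ) ∈ Ω := hp1
    obtain ⟨q, hqT, hmem⟩ := mem_iUnion₂.1 (hcover hqin)
    refine mem_iUnion₂.2 ⟨q, hqT, ?_⟩
    exact ⟨(phi k l hk hl p, p.2 ⟨0, hl⟩), ⟨hmem, ⟨hp2, mem_univ _⟩⟩,
      G_section k l hk hl p hp1⟩
  refine measure_mono_null hsub ?_
  refine (measure_biUnion_null_iff hTc).2 ?_
  intro q hq
  have hNuniv : volume (N ×ˢ (univ : Set ℝ)) = 0 := by
    rw [MeasureTheory.Measure.volume_eq_prod, Measure.prod_prod, hN0, zero_mul]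
  refine image_lipschitzOnWith_null hk hl (Gmap k l hk hl)
    ((hlip q.1 q.2).mono inter_subset_left)
    ((hUo q.1 q.2).measurableSet.inter (hNm.prod MeasurableSet.univ)) ?_
  exact measure_mono_null inter_subset_right hNuniv


section Main
variable (k l : ℕ) (hk : 0 < k) (hl : 0 < l)

def Zset : Set (EuclideanSpace ℝ (Fin (k+l-1))) :=
  {v | ∃ i : Fin k, v (idx1 k l hl i) ≠ 0}

lemma Zset_meas : MeasurableSet (Zset k l hl) := by
  have h1 : Zset k l hl = ⋃ i : Fin k,
      (fun v : EuclideanSpace ℝ (Fin (k+l-1)) => v (idx1 k l hl i)) ⁻¹' ({0}ᶜ) := by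
    ext v; simp [Zset]
  rw [h1]
  exact MeasurableSet.iUnion fun i =>
    ((PiLp.proj 2 (𝕜 := ℝ) (fun _ : Fin (k+l-1) => ℝ) (idx1 k l hl i)).continuous.measurable
      (measurableSet_singleton 0).compl)

lemma hmap_continuous : Continuous (hmap k l hk hl) :=
  continuous_iff_continuousAt.2 fun x => (hmap_analytic k l hk hl x (mem_univ x)).continuousAt

lemma hmap_injOn : InjOn (hmap k l hk hl) (Zset k l hl) := by
  intro v hv v' hv' heq
  have hcoord : ∀ (i : Fin k) (j : Fin l),
      v (idx1 k l hl i) * (if j = ⟨0, hl⟩ then 1 else v (idx2 k l hk j)) =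
      v' (idx1 k l hl i) * (if j = ⟨0, hl⟩ then 1 else v' (idx2 k l hk j)) := by
    intro i j
    have := congrFun (congrArg WithLp.ofLp heq) (finProdFinEquiv (i, j))
    rwa [hmap_apply, hmap_apply] at this
  have hU : ∀ i : Fin k, v (idx1 k l hl i) = v' (idx1 k l hl i) := by
    intro i
    have := hcoord i ⟨0, hl⟩
    simpa using this
  obtain ⟨i0, hi0⟩ := hv
  have hV : ∀ j : Fin l, j ≠ ⟨0, hl⟩ → v (idx2 k l hk j) = v' (idx2 k l hk j) := by
    intro j hj
    have h2 := hcoord i0 j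
    rw [if_neg hj, if_neg hj, ← hU i0] at h2
    exact mul_left_cancel₀ hi0 h2
  ext a
  by_cases ha : a.1 < k
  · have : a = idx1 k l hl ⟨a.1, ha⟩ := rfl
    rw [this]
    exact hU _
  · have hj1 : a.1 - k + 1 < l := by have := a.isLt; omega
    have hjne : (⟨a.1 - k + 1, hj1⟩ : Fin l) ≠ ⟨0, hl⟩ := by
      intro hcon
      have := congrArg Fin.val hcon
      simp only at this
      omega
    have : a = idx2 k l hk ⟨a.1 - k + 1, hj1⟩ := by
      apply Fin.ext
      show a.1 = k + (a.1 - k + 1) - 1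
      omega
    rw [this]
    exact hV _ hjne

lemma phi_apply1 (p : EuclideanSpace ℝ (Fin k) × EuclideanSpace ℝ (Fin l)) (i : Fin k) :
    phi k l hk hl p (idx1 k l hl i) = p.2 ⟨0, hl⟩ * p.1 i := by
  show (if h : (idx1 k l hl i).1 < k then p.2 ⟨0, hl⟩ * p.1 ⟨(idx1 k l hl i).1, h⟩
    else p.2 ⟨(idx1 k l hl i).1 - k + 1, _⟩ / p.2 ⟨0, hl⟩) = _
  rw [dif_pos (show (idx1 k l hl i).1 < k from i.isLt)]
  rfl

lemma phi_apply2 (p : EuclideanSpace ℝ (Fin k) × EuclideanSpace ℝ (Fin l)) (j : Fin l)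
    (hj : j ≠ ⟨0, hl⟩) :
    phi k l hk hl p (idx2 k l hk j) = p.2 j / p.2 ⟨0, hl⟩ := by
  have hj0 : j.1 ≠ 0 := fun h0 => hj (Fin.ext h0)
  have hge : ¬ ((idx2 k l hk j).1 < k) := by
    show ¬ (k + j.1 - 1 < k); omega
  show (if h : (idx2 k l hk j).1 < k then p.2 ⟨0, hl⟩ * p.1 ⟨(idx2 k l hk j).1, h⟩
    else p.2 ⟨(idx2 k l hk j).1 - k + 1, _⟩ / p.2 ⟨0, hl⟩) = _
  rw [dif_neg hge]
  have hidx : ∀ (h : (idx2 k l hk j).1 - k + 1 < l),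
      (⟨(idx2 k l hk j).1 - k + 1, h⟩ : Fin l) = j := fun h => Fin.ext (by
    show k + j.1 - 1 - k + 1 = j.1
    omega)
  rw [hidx]

lemma kron_eq_hmap_phi (p : EuclideanSpace ℝ (Fin k) × EuclideanSpace ℝ (Fin l))
    (ht : p.2 ⟨0, hl⟩ ≠ 0) :
    kron p.1 p.2 = hmap k l hk hl (phi k l hk hl p) := by
  ext pp
  obtain ⟨⟨i, j⟩, hq⟩ : ∃ q, finProdFinEquiv.symm pp = q := ⟨_, rfl⟩
  have hpp : pp = finProdFinEquiv (i, j) := by rw [← hq, Equiv.apply_symm_apply]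
  rw [hpp]
  rw [show kron p.1 p.2 (finProdFinEquiv (i,j)) = p.1 i * p.2 j from kron_apply _ _ _ _]
  rw [hmap_apply]
  by_cases hj : j = ⟨0, hl⟩
  · rw [if_pos hj, phi_apply1, hj, mul_one, mul_comm]
  · rw [if_neg hj, phi_apply1, phi_apply2 k l hk hl p j hj]
    field_simp

lemma kron_zero_of_fst (p : EuclideanSpace ℝ (Fin k) × EuclideanSpace ℝ (Fin l))
    (h : ∀ i, p.1 i = 0) : kron p.1 p.2 = 0 := by
  ext pp
  obtain ⟨⟨i, j⟩, hq⟩ : ∃ q, finProdFinEquiv.symm pp = q := ⟨_, rfl⟩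
  have hpp : pp = finProdFinEquiv (i, j) := by rw [← hq, Equiv.apply_symm_apply]
  rw [hpp, show kron p.1 p.2 (finProdFinEquiv (i,j)) = p.1 i * p.2 j from kron_apply _ _ _ _,
    h i, zero_mul]
  rfl

end Main

end KronAux

theorem kronecker_is_analytic {k l : ℕ} {Ω : Type*} [MeasureSpace Ω]
    [IsProbabilityMeasure (volume : Measure Ω)]
    (a : Ω → EuclideanSpace ℝ (Fin k)) (b : Ω → EuclideanSpace ℝ (Fin l))
    (ha : Measurable a) (hb : Measurable b)
    (hindep : ProbabilityTheory.IndepFun a b volume)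
    (hac : (Measure.map a volume).prod (Measure.map b volume) ≪
      (volume : Measure (EuclideanSpace ℝ (Fin k) × EuclideanSpace ℝ (Fin l)))) :
    IsAnalyticMeasure (k + l - 1) (k * l) (Measure.map (fun ω => kron (a ω) (b ω)) volume) := by
  classical
  by_cases hml : k * l = 0
  · intro U hU
    obtain ⟨y, hy⟩ : U.Nonempty := nonempty_of_measure_ne_zero hU.ne'
    haveI hempty : IsEmpty (Fin (k*l)) := ⟨fun i => by have := i.isLt; omega⟩
    refine ⟨fun _ => y, Set.univ, analyticOnNhd_const, ⟨0, ?_⟩, ?_, ?_⟩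
    · rw [jacobian]
      split_ifs with hlt
      · rw [Matrix.det_isEmpty, Real.sqrt_one]; exact one_ne_zero
      · haveI : IsEmpty (Fin (k+l-1)) := ⟨fun i => by have := i.isLt; omega⟩
        rw [Matrix.det_isEmpty, Real.sqrt_one]; exact one_ne_zero
    · exact isOpen_univ.measure_pos volume univ_nonempty
    · rintro y' ⟨x, _, rfl⟩; exact hy
  · obtain ⟨hk, hl⟩ : 0 < k ∧ 0 < l :=
      ⟨Nat.pos_of_ne_zero (fun h => hml (by rw [h, zero_mul])),
       Nat.pos_of_ne_zero (fun h => hml (by rw [h, mul_zero]))⟩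
    intro U hU
    refine ⟨KronAux.hmap k l hk hl, KronAux.hmap k l hk hl ⁻¹' U,
      KronAux.hmap_analytic k l hk hl, ⟨KronAux.v0 k l hk hl, ?_⟩, ?_,
      Set.image_preimage_subset _ _⟩
    · rw [KronAux.jacobian_hmap]; exact one_ne_zero
    · by_contra h0
      have hA0 : volume (KronAux.hmap k l hk hl ⁻¹' U) = 0 :=
        le_zero_iff.1 (not_lt.1 h0)
      set N := toMeasurable volume (KronAux.hmap k l hk hl ⁻¹' U) with hNdef
      have hNm : MeasurableSet N := measurableSet_toMeasurable _ _
      have hN0 : volume N = 0 := by rw [hNdef, measure_toMeasurable]; exact hA0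
      have hNsub : KronAux.hmap k l hk hl ⁻¹' U ⊆ N := subset_toMeasurable _ _
      set Z := KronAux.Zset k l hl with hZdef
      set W := (KronAux.hmap k l hk hl '' (N ∩ Z)) ∪ (({0} : Set (EuclideanSpace ℝ (Fin (k*l)))) ∪
        ((KronAux.hmap k l hk hl '' Z) ∪ ({0} : Set (EuclideanSpace ℝ (Fin (k*l)))))ᶜ) with hWdef
      have hcont : ContinuousOn (KronAux.hmap k l hk hl) Z :=
        (KronAux.hmap_continuous k l hk hl).continuousOn
      have hWm : MeasurableSet W := by
        apply MeasurableSet.union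
        · exact MeasurableSet.image_of_continuousOn_injOn
            (hNm.inter (KronAux.Zset_meas k l hl)) (hcont.mono inter_subset_right)
            ((KronAux.hmap_injOn k l hk hl).mono inter_subset_right)
        · refine MeasurableSet.union (measurableSet_singleton 0) (MeasurableSet.compl ?_)
          refine MeasurableSet.union ?_ (measurableSet_singleton 0)
          exact MeasurableSet.image_of_continuousOn_injOn (KronAux.Zset_meas k l hl) hcont
            (KronAux.hmap_injOn k l hk hl)
      have hUW : U ⊆ W := by
        intro y hyU
        by_cases hyin : y ∈ (KronAux.hmap k l hk hl '' Z) ∪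
            ({0} : Set (EuclideanSpace ℝ (Fin (k*l))))
        · rcases hyin with ⟨v, hvZ, hvy⟩ | hy0
          · left
            refine ⟨v, ⟨hNsub ?_, hvZ⟩, hvy⟩
            show KronAux.hmap k l hk hl v ∈ U
            rw [hvy]; exact hyU
          · right; left; exact hy0
        · right; right; exact hyin
      set Kf : EuclideanSpace ℝ (Fin k) × EuclideanSpace ℝ (Fin l) →
          EuclideanSpace ℝ (Fin (k*l)) := fun p => kron p.1 p.2 with hKfdef
      have hKcont : Continuous Kf := by
        show Continuous (⇑(EuclideanSpace.equiv (Fin (k*l)) ℝ).symm ∘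
          (fun (p : EuclideanSpace ℝ (Fin k) × EuclideanSpace ℝ (Fin l)) (pp : Fin (k*l)) =>
            p.1 (finProdFinEquiv.symm pp).1 * p.2 (finProdFinEquiv.symm pp).2))
        refine Continuous.comp (EuclideanSpace.equiv (Fin (k*l)) ℝ).symm.continuous ?_
        refine continuous_pi fun pp => Continuous.mul ?_ ?_
        · exact ((PiLp.proj 2 (𝕜 := ℝ) (fun _ : Fin k => ℝ)
            (finProdFinEquiv.symm pp).1).continuous).comp continuous_fst
        · exact ((PiLp.proj 2 (𝕜 := ℝ) (fun _ : Fin l => ℝ)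
            (finProdFinEquiv.symm pp).2).continuous).comp continuous_snd
      have hKmeas : Measurable Kf := hKcont.measurable
      have hmapeq : Measure.map (fun ω => kron (a ω) (b ω)) volume =
          Measure.map Kf ((Measure.map a volume).prod (Measure.map b volume)) := by
        rw [← (ProbabilityTheory.indepFun_iff_map_prod_eq_prod_map_map
          ha.aemeasurable hb.aemeasurable).1 hindep,
          Measure.map_map hKmeas (ha.prodMk hb)]
        rfl
      have hpre : volume (Kf ⁻¹' W) = 0 := by
        have hsub : Kf ⁻¹' W ⊆
            ({p : EuclideanSpace ℝ (Fin k) × EuclideanSpace ℝ (Fin l) |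
                p.2 ⟨0, hl⟩ ≠ 0 ∧ KronAux.phi k l hk hl p ∈ N} ∪
              ({p : EuclideanSpace ℝ (Fin k) × EuclideanSpace ℝ (Fin l) | p.1 ⟨0, hk⟩ = 0} ∪
               {p : EuclideanSpace ℝ (Fin k) × EuclideanSpace ℝ (Fin l) | p.2 ⟨0, hl⟩ = 0})) := by
          intro p hp
          rcases hp with h1 | h2 | h3
          · -- Kf p ∈ hmap '' (N ∩ Z)
            obtain ⟨v, ⟨hvN, hvZ⟩, hveq⟩ := h1
            have hvZ2 := hvZ
            obtain ⟨i0, hi0⟩ := hvZ2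
            have hco := congrFun (congrArg WithLp.ofLp hveq) (finProdFinEquiv (i0, (⟨0, hl⟩ : Fin l)))
            rw [KronAux.hmap_apply, if_pos rfl, mul_one] at hco
            rw [show Kf p (finProdFinEquiv (i0, (⟨0, hl⟩ : Fin l))) =
              p.1 i0 * p.2 ⟨0, hl⟩ from KronAux.kron_apply p.1 p.2 i0 ⟨0, hl⟩] at hco
            have ht : p.2 ⟨0, hl⟩ ≠ 0 := by
              intro h; rw [h, mul_zero] at hco; exact hi0 hco
            have hp1ne : p.1 i0 ≠ 0 := by
              intro h; rw [h, zero_mul] at hco; exact hi0 hco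
            have hphiZ : KronAux.phi k l hk hl p ∈ Z :=
              ⟨i0, by rw [KronAux.phi_apply1]; exact mul_ne_zero ht hp1ne⟩
            have hKeq : KronAux.hmap k l hk hl (KronAux.phi k l hk hl p) =
                KronAux.hmap k l hk hl v := by
              rw [← KronAux.kron_eq_hmap_phi k l hk hl p ht]
              exact hveq.symm
            have hphiv : KronAux.phi k l hk hl p = v :=
              KronAux.hmap_injOn k l hk hl hphiZ hvZ hKeq
            exact Or.inl ⟨ht, hphiv ▸ hvN⟩
          · -- Kf p = 0
            rw [mem_singleton_iff] at h2
            by_cases hall : ∀ i : Fin k, p.1 i = 0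
            · exact Or.inr (Or.inl (hall ⟨0, hk⟩))
            · push_neg at hall
              obtain ⟨i1, hi1⟩ := hall
              have hc := congrFun (congrArg WithLp.ofLp h2) (finProdFinEquiv (i1, (⟨0, hl⟩ : Fin l)))
              rw [show Kf p (finProdFinEquiv (i1, (⟨0, hl⟩ : Fin l))) =
                p.1 i1 * p.2 ⟨0, hl⟩ from KronAux.kron_apply p.1 p.2 i1 ⟨0, hl⟩] at hc
              have hc' : p.1 i1 * p.2 ⟨0, hl⟩ = 0 := hc
              rcases mul_eq_zero.1 hc' with h | h
              · exact absurd h hi1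
              · exact Or.inr (Or.inr h)
          · -- Kf p in the complement
            right; right
            show p.2 ⟨0, hl⟩ = 0
            by_contra ht
            apply h3
            by_cases hall : ∀ i : Fin k, p.1 i = 0
            · exact Or.inr (mem_singleton_iff.2 (KronAux.kron_zero_of_fst k l p hall))
            · push_neg at hall
              obtain ⟨i1, hi1⟩ := hall
              exact Or.inl ⟨KronAux.phi k l hk hl p,
                ⟨i1, by rw [KronAux.phi_apply1]; exact mul_ne_zero ht hi1⟩,
                (KronAux.kron_eq_hmap_phi k l hk hl p ht).symm⟩
        refine measure_mono_null hsub ?_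
        refine measure_union_null (KronAux.S_null k l hk hl N hNm hN0) ?_
        exact measure_union_null (KronAux.null_fst k l ⟨0, hk⟩) (KronAux.null_snd k l ⟨0, hl⟩)
      have hW0 : Measure.map (fun ω => kron (a ω) (b ω)) volume W = 0 := by
        rw [hmapeq, Measure.map_apply hKmeas hWm]
        exact hac hpre
      have hU0 : Measure.map (fun ω => kron (a ω) (b ω)) volume U = 0 :=
        le_antisymm (hW0 ▸ measure_mono hUW) zero_le
      exact hU.ne' hU0
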